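/- The univariate box spline B(x | (1, √(5/2))), whose Fourier transform is f̂(w) = ((1 − e^{−2πiw})/(2πiw)) · ((1 − e^{−2πi√(5/2)w})/(2πi√(5/2)w)), satisfies the refinement equation f(x) = (1/10) Σ_{j=0}^9 f(√10 · x − d_j), where (d₀,…,d₉) = (0, 1, 2, 3, 4, 5/√10, 1+5/√10, 2+5/√10, 3+5/√10, 4+5/√10). -/

import Mathlib

/-- The box spline B(x | (1, √(5/2))) is √10-refinable (Fourier side). -/
theorem stmt11 (F : ℝ → ℂ)
    (hF : ∀ w : ℝ, F w =
      ((1 - Complex.exp (-2 * Real.pi * Complex.I * w)) / (2 * Real.pi * Complex.I * w)) *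
      ((1 - Complex.exp (-2 * Real.pi * Complex.I * Real.sqrt (5 / 2) * w)) /
        (2 * Real.pi * Complex.I * Real.sqrt (5 / 2) * w)))
    (d : Fin 10 → ℝ)
    (hd : d = ![0, 1, 2, 3, 4, 5 / Real.sqrt 10, 1 + 5 / Real.sqrt 10,
      2 + 5 / Real.sqrt 10, 3 + 5 / Real.sqrt 10, 4 + 5 / Real.sqrt 10]) :
    ∀ w : ℝ, F (Real.sqrt 10 * w) =
      ((1 : ℂ) / 10 * ∑ j, Complex.exp (-2 * Real.pi * Complex.I * d j * w)) * F w := by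
  -- basic facts about the square roots
  have hs10 : Real.sqrt 10 = 2 * Real.sqrt (5 / 2) := by
    rw [show (10 : ℝ) = 2 ^ 2 * (5 / 2) by norm_num, Real.sqrt_mul (by positivity),
      Real.sqrt_sq (by norm_num)]
  have hprod : Real.sqrt (5 / 2) * Real.sqrt 10 = 5 := by
    rw [← Real.sqrt_mul (by norm_num), show (5 / 2 : ℝ) * 10 = 5 ^ 2 by norm_num,
      Real.sqrt_sq (by norm_num)]
  have h10ne : Real.sqrt 10 ≠ 0 := by positivity
  have h5 : 5 / Real.sqrt 10 = Real.sqrt (5 / 2) := by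
    rw [div_eq_iff h10ne]
    linarith [hprod]
  intro w
  rcases eq_or_ne w 0 with rfl | hw
  · simp [hF]
  -- nonzero denominators
  have hπ : (Real.pi : ℂ) ≠ 0 := by exact_mod_cast Real.pi_ne_zero
  have hwC : (w : ℂ) ≠ 0 := by exact_mod_cast hw
  have hsC : ((Real.sqrt (5 / 2) : ℝ) : ℂ) ≠ 0 := by
    exact_mod_cast (by positivity : Real.sqrt (5 / 2) ≠ 0)
  rw [hF, hF, hd]
  -- rewrite the exponentials
  set s : ℝ := Real.sqrt (5 / 2) with hsdef
  have e1 : Complex.exp (-2 * Real.pi * Complex.I * ((Real.sqrt 10 * w : ℝ) : ℂ)) =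
      Complex.exp (-2 * Real.pi * Complex.I * s * w) ^ 2 := by
    rw [← Complex.exp_nat_mul]
    congr 1
    push_cast [hs10]
    ring
  have e2 : Complex.exp (-2 * Real.pi * Complex.I * s * ((Real.sqrt 10 * w : ℝ) : ℂ)) =
      Complex.exp (-2 * Real.pi * Complex.I * w) ^ 5 := by
    rw [← Complex.exp_nat_mul]
    congr 1
    push_cast
    have : (s : ℂ) * (Real.sqrt 10 : ℝ) = 5 := by exact_mod_cast congrArg (Complex.ofReal) hprod
    calc -2 * (Real.pi : ℂ) * Complex.I * s * ((Real.sqrt 10 : ℝ) * w)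
        = -2 * (Real.pi : ℂ) * Complex.I * ((s : ℂ) * (Real.sqrt 10 : ℝ)) * w := by ring
      _ = (5 : ℕ) * (-2 * (Real.pi : ℂ) * Complex.I * w) := by rw [this]; push_cast; ring
  have ek : ∀ k : ℕ, Complex.exp (-2 * Real.pi * Complex.I * (k : ℝ) * w) =
      Complex.exp (-2 * Real.pi * Complex.I * w) ^ k := by
    intro k
    rw [← Complex.exp_nat_mul]
    congr 1
    push_cast
    ring
  have eks : ∀ k : ℕ, Complex.exp (-2 * Real.pi * Complex.I * ((k : ℝ) + s) * w) =
      Complex.exp (-2 * Real.pi * Complex.I * w) ^ k *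
        Complex.exp (-2 * Real.pi * Complex.I * s * w) := by
    intro k
    rw [← Complex.exp_nat_mul, ← Complex.exp_add]
    congr 1
    push_cast
    ring
  set q : ℂ := Complex.exp (-2 * Real.pi * Complex.I * w) with hq
  set z : ℂ := Complex.exp (-2 * Real.pi * Complex.I * s * w) with hz
  have hsum : ∑ j : Fin 10, Complex.exp (-2 * Real.pi * Complex.I *
      ((![0, 1, 2, 3, 4, 5 / Real.sqrt 10, 1 + 5 / Real.sqrt 10,
      2 + 5 / Real.sqrt 10, 3 + 5 / Real.sqrt 10, 4 + 5 / Real.sqrt 10] : Fin 10 → ℝ) j) * w) =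
      (1 + q + q ^ 2 + q ^ 3 + q ^ 4) * (1 + z) := by
    simp only [Fin.sum_univ_succ, Fin.sum_univ_zero, Matrix.cons_val_zero,
      Matrix.cons_val_succ, h5]
    have h0 := ek 0
    have h1 := ek 1
    have h2 := ek 2
    have h3 := ek 3
    have h4 := ek 4
    have g1 := eks 1
    have g2 := eks 2
    have g3 := eks 3
    have g4 := eks 4
    push_cast at h0 h1 h2 h3 h4 g1 g2 g3 g4 ⊢
    rw [h0, h1, h2, h3, h4, g1, g2, g3, g4]
    ring
  rw [hsum, e1, e2]
  have hs10C : ((Real.sqrt 10 : ℝ) : ℂ) = 2 * (s : ℂ) := by exact_mod_cast hs10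
  have hssR : s * s = 5 / 2 := by
    rw [hsdef]; exact Real.mul_self_sqrt (by norm_num)
  have hss : (s : ℂ) * (s : ℂ) = 5 / 2 := by rw [← Complex.ofReal_mul, hssR]; norm_num
  push_cast [hs10C]
  field_simp
  linear_combination (-4 * ((1 - z ^ 2) * (1 - q ^ 5))) * hss
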